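/- With G, L as above, the product L G L^T (restricted to any finite n×n upper-left block, where L is lower triangular) is a diagonal matrix; equivalently, sum over k of L_{n,k} G_{k,m} = 0 for all 0 ≤ m < n. -/

import Mathlib

open Finset

noncomputable def ff (x : ℚ) (k : ℕ) : ℚ := ∏ i ∈ Finset.range k, (x - i)

lemma ff_zero (x : ℚ) : ff x 0 = 1 := by simp [ff]

lemma ff_succ (x : ℚ) (k : ℕ) : ff x (k+1) = ff x k * (x - k) := Finset.prod_range_succ _ _

lemma ff_succ_left (x : ℚ) (k : ℕ) : ff x (k+1) = x * ff (x - 1) k := by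
  rw [ff, Finset.prod_range_succ']
  simp only [Nat.cast_zero, sub_zero, ff]
  rw [mul_comm]
  congr 1
  apply Finset.prod_congr rfl
  intro i _
  push_cast
  ring

lemma ff_add (x : ℚ) (s t : ℕ) : ff x (s + t) = ff x s * ff (x - s) t := by
  induction t with
  | zero => simp [ff_zero]
  | succ t ih =>
    have h : s + (t+1) = (s+t)+1 := rfl
    rw [h, ff_succ, ih, ff_succ]
    push_cast
    ring

lemma ff_eq_zero_of_lt (N k : ℕ) (h : N < k) : ff (N : ℚ) k = 0 :=
  Finset.prod_eq_zero (Finset.mem_range.2 h) (by simp)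

lemma ff_natCast (N k : ℕ) : ff (N : ℚ) k = (N.descFactorial k : ℚ) := by
  induction k with
  | zero => simp [ff_zero]
  | succ k ih =>
    rcases lt_or_ge N (k+1) with h | h
    · rw [ff_eq_zero_of_lt N (k+1) h, Nat.descFactorial_eq_zero_iff_lt.2 h, Nat.cast_zero]
    · rw [ff_succ, ih, Nat.descFactorial_succ]
      have hk : k ≤ N := by omega
      push_cast [Nat.cast_sub hk]
      ring

lemma ffV (k : ℕ) (x y : ℚ) :
    ff (x + y) k = ∑ l ∈ Finset.range (k+1), (k.choose l : ℚ) * ff x l * ff y (k - l) := by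
  induction k with
  | zero => simp [ff_zero]
  | succ k ih =>
    have hsplit : ∑ l ∈ Finset.range (k+2), (((k+1).choose l : ℕ) : ℚ) * ff x l * ff y (k+1-l)
        = (∑ l ∈ Finset.range (k+1), (k.choose l : ℚ) * (ff x l * (x - l)) * ff y (k-l))
          + ∑ l ∈ Finset.range (k+1), (k.choose l : ℚ) * ff x l * ff y ((k-l)+1) := by
      rw [Finset.sum_range_succ' (fun l => (((k+1).choose l : ℕ) : ℚ) * ff x l * ff y (k+1-l)) (k+1)]
      have e1 : ∀ l ∈ Finset.range (k+1),
          (((k+1).choose (l+1) : ℕ) : ℚ) * ff x (l+1) * ff y (k+1-(l+1))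
          = (k.choose l : ℚ) * (ff x l * (x - l)) * ff y (k-l)
            + (k.choose (l+1) : ℚ) * ff x (l+1) * ff y (k-l) := by
        intro l _
        rw [Nat.choose_succ_succ, Nat.succ_sub_succ]
        push_cast
        rw [ff_succ]
        ring
      rw [Finset.sum_congr rfl e1, Finset.sum_add_distrib]
      have e2 : (∑ l ∈ Finset.range (k+1), (k.choose (l+1) : ℚ) * ff x (l+1) * ff y (k-l))
            + (((k+1).choose 0 : ℕ) : ℚ) * ff x 0 * ff y (k+1-0)
          = ∑ l ∈ Finset.range (k+1), (k.choose l : ℚ) * ff x l * ff y ((k-l)+1) := by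
        have := Finset.sum_range_succ' (fun l => (k.choose l : ℚ) * ff x l * ff y (k+1-l)) (k+1)
        have htop : ∑ l ∈ Finset.range (k+2), (k.choose l : ℚ) * ff x l * ff y (k+1-l)
            = ∑ l ∈ Finset.range (k+1), (k.choose l : ℚ) * ff x l * ff y (k+1-l) := by
          rw [Finset.sum_range_succ]
          simp [Nat.choose_succ_self]
        rw [htop] at this
        have e3 : ∀ l ∈ Finset.range (k+1), (k.choose l : ℚ) * ff x l * ff y (k+1-l)
            = (k.choose l : ℚ) * ff x l * ff y ((k-l)+1) := by
          intro l hl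
          have hlk := Finset.mem_range.1 hl
          have : k + 1 - l = (k-l)+1 := by omega
          rw [this]
        rw [Finset.sum_congr rfl e3] at this
        rw [this]
        congr 1
        · apply Finset.sum_congr rfl
          intro l _
          rw [Nat.succ_sub_succ]
        · simp
      rw [add_assoc, e2]
    rw [ff_succ, ih, Finset.sum_mul, hsplit, ← Finset.sum_add_distrib]
    apply Finset.sum_congr rfl
    intro l hl
    have hlk : l ≤ k := by
      have := Finset.mem_range.1 hl; omega
    rw [ff_succ]
    have hcast : ((k - l : ℕ) : ℚ) = (k : ℚ) - l := by
      push_cast [Nat.cast_sub hlk]; ring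
    rw [hcast]
    ring

lemma AS (j : ℕ) (g : ℕ → ℚ) :
    ∑ i ∈ Finset.range (j+2), (-1:ℚ)^i * ((j+1).choose i : ℚ) * g i
      = ∑ i ∈ Finset.range (j+1), (-1:ℚ)^i * (j.choose i : ℚ) * g i
        - ∑ i ∈ Finset.range (j+1), (-1:ℚ)^i * (j.choose i : ℚ) * g (i+1) := by
  rw [Finset.sum_range_succ' (fun i => (-1:ℚ)^i * ((j+1).choose i : ℚ) * g i) (j+1)]
  have e1 : ∀ i ∈ Finset.range (j+1),
      (-1:ℚ)^(i+1) * ((j+1).choose (i+1) : ℚ) * g (i+1)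
      = (-1:ℚ)^(i+1) * (j.choose i : ℚ) * g (i+1) + (-1:ℚ)^(i+1) * (j.choose (i+1) : ℚ) * g (i+1) := by
    intro i _
    rw [Nat.choose_succ_succ]
    push_cast
    ring
  rw [Finset.sum_congr rfl e1]
  have e2 : (∑ i ∈ Finset.range (j+1), (-1:ℚ)^(i+1) * (j.choose (i+1) : ℚ) * g (i+1))
        + (-1:ℚ)^0 * (((j+1).choose 0 : ℕ) : ℚ) * g 0
      = ∑ i ∈ Finset.range (j+1), (-1:ℚ)^i * (j.choose i : ℚ) * g i := by
    have h := Finset.sum_range_succ' (fun i => (-1:ℚ)^i * (j.choose i : ℚ) * g i) (j+1)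
    have htop : ∑ i ∈ Finset.range (j+2), (-1:ℚ)^i * (j.choose i : ℚ) * g i
        = ∑ i ∈ Finset.range (j+1), (-1:ℚ)^i * (j.choose i : ℚ) * g i := by
      rw [Finset.sum_range_succ]
      simp [Nat.choose_succ_self]
    rw [htop] at h
    rw [h]
    simp
  have e3 : ∀ i ∈ Finset.range (j+1),
      (-1:ℚ)^(i+1) * (j.choose i : ℚ) * g (i+1) = -((-1:ℚ)^i * (j.choose i : ℚ) * g (i+1)) := by
    intro i _; ring
  calc (∑ i ∈ Finset.range (j+1), ((-1:ℚ)^(i+1) * (j.choose i : ℚ) * g (i+1)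
          + (-1:ℚ)^(i+1) * (j.choose (i+1) : ℚ) * g (i+1)))
        + (-1:ℚ)^0 * (((j+1).choose 0 : ℕ) : ℚ) * g 0
      = (∑ i ∈ Finset.range (j+1), (-1:ℚ)^(i+1) * (j.choose i : ℚ) * g (i+1))
        + ((∑ i ∈ Finset.range (j+1), (-1:ℚ)^(i+1) * (j.choose (i+1) : ℚ) * g (i+1))
            + (-1:ℚ)^0 * (((j+1).choose 0 : ℕ) : ℚ) * g 0) := by
        rw [Finset.sum_add_distrib]; ring
    _ = ∑ i ∈ Finset.range (j+1), (-1:ℚ)^i * (j.choose i : ℚ) * g i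
        - ∑ i ∈ Finset.range (j+1), (-1:ℚ)^i * (j.choose i : ℚ) * g (i+1) := by
        rw [e2, Finset.sum_congr rfl e3, Finset.sum_neg_distrib]
        ring

lemma tri (N : ℕ) (f : ℕ → ℕ → ℚ) :
    ∑ k ∈ Finset.range N, ∑ l ∈ Finset.range (k+1), f k l
      = ∑ l ∈ Finset.range N, ∑ i ∈ Finset.range (N - l), f (l+i) l := by
  induction N with
  | zero => simp
  | succ N ih =>
    rw [Finset.sum_range_succ, ih]
    have e1 : ∀ l ∈ Finset.range (N+1),
        ∑ i ∈ Finset.range (N+1-l), f (l+i) l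
        = (∑ i ∈ Finset.range (N-l), f (l+i) l) + f N l := by
      intro l hl
      have hlN := Finset.mem_range.1 hl
      have h : N+1-l = (N-l)+1 := by omega
      rw [h, Finset.sum_range_succ]
      congr 2
      omega
    rw [Finset.sum_congr rfl e1, Finset.sum_add_distrib]
    congr 1
    rw [Finset.sum_range_succ]
    simp

lemma ff_rho_ne (ρ : ℚ) (hρ : ∀ z : ℤ, ρ + z ≠ 0) (x : ℚ) (k : ℕ)
    (hx : ∃ z : ℤ, x = ρ + z) : ff x k ≠ 0 := by
  obtain ⟨z, rfl⟩ := hx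
  unfold ff
  rw [Finset.prod_ne_zero_iff]
  intro i _
  have h := hρ (z - i)
  intro hc
  apply h
  push_cast
  linarith

lemma lemB (ρ : ℚ) (hρ : ∀ z : ℤ, ρ + z ≠ 0) :
    ∀ (j u : ℕ), ∑ i ∈ Finset.range (j+1), (-1:ℚ)^i * (j.choose i : ℚ)
        * (((u+i).factorial : ℚ) / ff (ρ + ((u+i : ℕ) : ℚ)) (u+i))
      = ρ * (u.factorial : ℚ) / ff (ρ + (j:ℚ) + (u:ℚ)) (u+1) := by
  intro j
  induction j with
  | zero =>
    intro u
    simp only [Finset.range_one, Finset.sum_singleton, Nat.choose_self, Nat.cast_one, pow_zero,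
      Nat.add_zero, Nat.cast_zero, one_mul, zero_add]
    have hf : ff (ρ + (u:ℚ)) (u+1) = ff (ρ + (u:ℚ)) u * ρ := by
      rw [ff_succ]; ring_nf
    rw [show ρ + 0 + (u:ℚ) = ρ + (u:ℚ) from by ring, hf]
    have h1 : ff (ρ + (u:ℚ)) u ≠ 0 :=
      ff_rho_ne ρ hρ _ _ ⟨(u:ℤ), by push_cast; ring⟩
    have h2 : ρ ≠ 0 := by have := hρ 0; simpa using this
    field_simp
  | succ j ih =>
    intro u
    have hAS := AS j (fun i => ((u+i).factorial : ℚ) / ff (ρ + ((u+i : ℕ) : ℚ)) (u+i))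
    rw [hAS, ih u]
    have e1 : ∀ i ∈ Finset.range (j+1),
        (-1:ℚ)^i * (j.choose i : ℚ) * (((u+(i+1)).factorial : ℚ) / ff (ρ + ((u+(i+1) : ℕ) : ℚ)) (u+(i+1)))
        = (-1:ℚ)^i * (j.choose i : ℚ) * ((((u+1)+i).factorial : ℚ) / ff (ρ + (((u+1)+i : ℕ) : ℚ)) ((u+1)+i)) := by
      intro i _
      have h : u + (i+1) = (u+1)+i := by omega
      rw [h]
    rw [Finset.sum_congr rfl e1, ih (u+1)]
    have hA : ff (ρ + (j:ℚ) + ((u:ℚ)+1)) (u+1+1) = (ρ + (j:ℚ) + (u:ℚ) + 1) * ff (ρ + (j:ℚ) + (u:ℚ)) (u+1) := by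
      rw [ff_succ_left]
      rw [show ρ + (j:ℚ) + ((u:ℚ)+1) - 1 = ρ + (j:ℚ) + (u:ℚ) from by ring]
      ring
    have hne1 : ff (ρ + (j:ℚ) + (u:ℚ)) (u+1) ≠ 0 :=
      ff_rho_ne ρ hρ _ _ ⟨(j:ℤ)+(u:ℤ), by push_cast; ring⟩
    have hne2 : (ρ + (j:ℚ)) ≠ 0 := by
      have := hρ (j:ℤ); push_cast at this; exact this
    have hne3 : (ρ + (j:ℚ) + (u:ℚ) + 1) ≠ 0 := by
      have h := hρ ((j:ℤ)+(u:ℤ)+1)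
      push_cast at h
      intro hc
      exact h (by linarith)
    have h5 : ff (ρ + ((j:ℚ)+1) + (u:ℚ)) (u+1+1) = ff (ρ + ((j:ℚ)+1) + (u:ℚ)) (u+1) * (ρ + (j:ℚ)) := by
      rw [ff_succ]
      push_cast
      ring
    have h6 : ff (ρ + ((j:ℚ)+1) + (u:ℚ)) (u+1+1) = (ρ + (j:ℚ) + (u:ℚ) + 1) * ff (ρ + (j:ℚ) + (u:ℚ)) (u+1) := by
      rw [ff_succ_left]
      rw [show ρ + ((j:ℚ)+1) + (u:ℚ) - 1 = ρ + (j:ℚ) + (u:ℚ) from by ring]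
      ring
    have hgoalden : ff (ρ + ((j:ℚ)+1) + (u:ℚ)) (u+1)
        = (ρ + (j:ℚ) + (u:ℚ) + 1) * ff (ρ + (j:ℚ) + (u:ℚ)) (u+1) / (ρ + (j:ℚ)) := by
      rw [eq_div_iff hne2, ← h5, h6]
    have hfact : (((u+1).factorial : ℕ) : ℚ) = ((u:ℚ)+1) * (u.factorial : ℚ) := by
      rw [Nat.factorial_succ]; push_cast; ring
    push_cast
    rw [hA, hgoalden, hfact]
    field_simp
    ring

lemma prod_diff (d : ℚ) (m : ℕ) :
    (∏ i ∈ Finset.range (m+1), (d+1+i)) - ∏ i ∈ Finset.range (m+1), (d+i)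
      = ((m:ℚ)+1) * ∏ i ∈ Finset.range m, (d+1+i) := by
  rw [Finset.prod_range_succ]
  rw [Finset.prod_range_succ' (fun i => d + (i:ℚ)) m]
  have h : ∀ i ∈ Finset.range m, d + (((i+1):ℕ):ℚ) = d+1+i := by
    intro i _; push_cast; ring
  rw [Finset.prod_congr rfl h]
  push_cast
  ring

lemma lemD : ∀ (m : ℕ), ∀ (n : ℕ) (c : ℚ), m < n →
    ∑ l ∈ Finset.range (n+1), (-1:ℚ)^l * (n.choose l : ℚ) * ∏ i ∈ Finset.range m, (c + l + i) = 0 := by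
  intro m
  induction m with
  | zero =>
    intro n c hn
    simp only [Finset.range_zero, Finset.prod_empty, mul_one]
    have h := Int.alternating_sum_range_choose_of_ne (n := n) (by omega)
    exact_mod_cast h
  | succ m ih =>
    intro n c hn
    obtain ⟨n', rfl⟩ : ∃ n', n = n'+1 := ⟨n-1, by omega⟩
    have hAS := AS n' (fun l => ∏ i ∈ Finset.range (m+1), (c + l + i))
    rw [hAS]
    have key : (∑ l ∈ Finset.range (n'+1), (-1:ℚ)^l * (n'.choose l : ℚ) * ∏ i ∈ Finset.range (m+1), (c + ((l+1:ℕ):ℚ) + i))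
        - ∑ l ∈ Finset.range (n'+1), (-1:ℚ)^l * (n'.choose l : ℚ) * ∏ i ∈ Finset.range (m+1), (c + l + i)
        = ((m:ℚ)+1) * ∑ l ∈ Finset.range (n'+1), (-1:ℚ)^l * (n'.choose l : ℚ) * ∏ i ∈ Finset.range m, ((c+1) + l + i) := by
      rw [← Finset.sum_sub_distrib, Finset.mul_sum]
      apply Finset.sum_congr rfl
      intro l _
      have e1 : ∏ i ∈ Finset.range (m+1), (c + ((l+1:ℕ):ℚ) + i) = ∏ i ∈ Finset.range (m+1), ((c+l) + 1 + i) := by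
        apply Finset.prod_congr rfl; intro i _; push_cast; ring
      have e2 : ∏ i ∈ Finset.range (m+1), (c + (l:ℚ) + i) = ∏ i ∈ Finset.range (m+1), ((c+l) + i) := rfl
      have e3 : ∏ i ∈ Finset.range m, ((c+1) + (l:ℚ) + i) = ∏ i ∈ Finset.range m, ((c+l) + 1 + i) := by
        apply Finset.prod_congr rfl; intro i _; ring
      rw [e1, e2, e3]
      have hd := prod_diff ((c:ℚ)+l) m
      calc (-1:ℚ)^l * (n'.choose l : ℚ) * ∏ i ∈ Finset.range (m+1), ((c+l) + 1 + i)
            - (-1:ℚ)^l * (n'.choose l : ℚ) * ∏ i ∈ Finset.range (m+1), ((c+l) + i)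
          = (-1:ℚ)^l * (n'.choose l : ℚ) * ((∏ i ∈ Finset.range (m+1), ((c+l) + 1 + i)) - ∏ i ∈ Finset.range (m+1), ((c+l) + i)) := by ring
        _ = ((m:ℚ)+1) * ((-1:ℚ)^l * (n'.choose l : ℚ) * ∏ i ∈ Finset.range m, ((c+l) + 1 + i)) := by rw [hd]; ring
    have hzero := ih n' (c+1) (by omega)
    have : (∑ l ∈ Finset.range (n'+1), (-1:ℚ)^l * (n'.choose l : ℚ) * ∏ i ∈ Finset.range (m+1), (c + ((l+1:ℕ):ℚ) + i))
        - ∑ l ∈ Finset.range (n'+1), (-1:ℚ)^l * (n'.choose l : ℚ) * ∏ i ∈ Finset.range (m+1), (c + l + i) = 0 := by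
      rw [key, hzero]; ring
    linarith [this]

/-- Generalized binomial coefficient `x(x-1)⋯(x-n+1)/n!` for rational `x`. -/
noncomputable def gchoose (x : ℚ) (n : ℕ) : ℚ :=
  (∏ i ∈ Finset.range n, (x - i)) / (n.factorial : ℚ)

/-- The generalized Catalan numbers `g_n = p^{2n} binom(n + q/p, n)`. -/
noncomputable def gcat (p q : ℤ) (n : ℕ) : ℚ :=
  (p : ℚ) ^ (2 * n) * gchoose ((n : ℚ) + (q : ℚ) / (p : ℚ)) n

/-- The Hankel matrix entries `G_{i,j} = 1/g_{i+j+a}`. -/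
noncomputable def Gmat (p q : ℤ) (a i j : ℕ) : ℚ :=
  1 / gcat p q (i + j + a)

/-- `L_{n,k} = (-1)^{n+k} p^{2k} binom(n+k+a+q/p-1, k) binom(n+a, k+a)`. -/
noncomputable def Lmat (p q : ℤ) (a n k : ℕ) : ℚ :=
  (-1 : ℚ) ^ (n + k) * (p : ℚ) ^ (2 * k)
    * gchoose ((n : ℚ) + (k : ℚ) + (a : ℚ) + (q : ℚ) / (p : ℚ) - 1) k
    * gchoose ((n : ℚ) + (a : ℚ)) (k + a)

lemma gchoose_eq_ff (x : ℚ) (k : ℕ) : gchoose x k = ff x k / (k.factorial : ℚ) := rfl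

lemma gchoose_natCast (N k : ℕ) : gchoose (N : ℚ) k = (N.choose k : ℚ) := by
  rw [gchoose_eq_ff, ff_natCast, Nat.descFactorial_eq_factorial_mul_choose]
  push_cast
  rw [mul_comm, mul_div_assoc, div_self (by exact_mod_cast k.factorial_ne_zero), mul_one]

lemma asc_prod (a l m : ℕ) :
    (∏ i ∈ Finset.range m, ((a:ℚ)+1+(l:ℚ)+(i:ℚ))) * (((a+l).factorial : ℕ) : ℚ)
      = (((m+a+l).factorial : ℕ) : ℚ) := by
  have h1 : ∏ i ∈ Finset.range m, ((a:ℚ)+1+(l:ℚ)+(i:ℚ)) = ff (((a+l+m : ℕ)):ℚ) m := by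
    rw [ff, ← Finset.prod_range_reflect]
    apply Finset.prod_congr rfl
    intro i hi
    have him : i < m := Finset.mem_range.1 hi
    have : (m - 1 - i : ℕ) = m - (i+1) := by omega
    rw [this, Nat.cast_sub (by omega : i+1 ≤ m)]
    push_cast
    ring
  rw [h1, ff_natCast]
  have h2 := Nat.factorial_mul_descFactorial (show m ≤ a+l+m by omega)
  rw [show a+l+m-m = a+l by omega] at h2
  rw [show m+a+l = a+l+m by omega]
  exact_mod_cast by rw [mul_comm] at h2; exact h2

lemma coefId (n a l i : ℕ) (hl : l ≤ n) (hi : i ≤ n - l) :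
    ((l+i).choose l : ℚ) * ff ((a:ℚ)+(l:ℚ)+(i:ℚ)) i * ((n+a).choose (l+i+a) : ℚ)
        * ((l.factorial : ℚ) * ((a+l).factorial : ℚ) * ((n-l).factorial : ℚ))
      = ((l+i).factorial : ℚ) * ((n+a).factorial : ℚ) * ((n-l).choose i : ℚ) := by
  have hff : ff ((a:ℚ)+(l:ℚ)+(i:ℚ)) i = (((a+l+i).descFactorial i : ℕ) : ℚ) := by
    rw [show (a:ℚ)+(l:ℚ)+(i:ℚ) = ((a+l+i : ℕ) : ℚ) from by push_cast; ring, ff_natCast]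
  have h2 := Nat.factorial_mul_descFactorial (show i ≤ a+l+i by omega)
  rw [show a+l+i-i = a+l by omega] at h2
  have ed : (((a+l+i).descFactorial i : ℕ) : ℚ) = ((a+l+i).factorial : ℚ) / ((a+l).factorial : ℚ) := by
    rw [eq_div_iff (by exact_mod_cast (a+l).factorial_ne_zero)]
    exact_mod_cast by rw [mul_comm] at h2; exact h2
  rw [hff, ed]
  rw [Nat.cast_choose ℚ (show l ≤ l+i by omega),
      Nat.cast_choose ℚ (show l+i+a ≤ n+a by omega),
      Nat.cast_choose ℚ hi]
  rw [show l+i-l = i by omega, show n+a-(l+i+a) = n-l-i by omega]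
  rw [show a+l+i = l+i+a by omega]
  have hnl : (n-l)-i = n-l-i := rfl
  field_simp

lemma main_sum (ρ : ℚ) (hρ : ∀ z : ℤ, ρ + z ≠ 0) (a m n : ℕ) (hm : m < n) :
    ∑ k ∈ Finset.range (n+1), (-1:ℚ)^k
        * (ff (ρ + (n:ℚ) - 1 + ((a:ℚ)+(k:ℚ))) k / (k.factorial : ℚ))
        * (((n+a).choose (k+a) : ℕ) : ℚ)
        * ((((k+m+a).factorial : ℕ) : ℚ) / ff (ρ + (((k+m+a):ℕ) : ℚ)) (k+m+a)) = 0 := by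
  have hffX : ff (ρ + (n:ℚ) + (m:ℚ) + (a:ℚ)) (m+a+1) ≠ 0 :=
    ff_rho_ne ρ hρ _ _ ⟨(n:ℤ)+(m:ℤ)+(a:ℤ), by push_cast; ring⟩
  have hffl : ∀ l : ℕ, ff (ρ + (n:ℚ) - 1) l ≠ 0 :=
    fun l => ff_rho_ne ρ hρ _ _ ⟨(n:ℤ)-1, by push_cast; ring⟩
  have step1 : ∀ k ∈ Finset.range (n+1),
      (-1:ℚ)^k * (ff (ρ + (n:ℚ) - 1 + ((a:ℚ)+(k:ℚ))) k / (k.factorial : ℚ))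
        * (((n+a).choose (k+a) : ℕ) : ℚ)
        * ((((k+m+a).factorial : ℕ) : ℚ) / ff (ρ + (((k+m+a):ℕ) : ℚ)) (k+m+a))
      = ∑ l ∈ Finset.range (k+1),
          (-1:ℚ)^k * ((k.choose l : ℚ) * ff (ρ + (n:ℚ) - 1) l * ff ((a:ℚ)+(k:ℚ)) (k-l) / (k.factorial : ℚ))
            * (((n+a).choose (k+a) : ℕ) : ℚ)
            * ((((k+m+a).factorial : ℕ) : ℚ) / ff (ρ + (((k+m+a):ℕ) : ℚ)) (k+m+a)) := by
    intro k _
    rw [ffV k (ρ + (n:ℚ) - 1) ((a:ℚ)+(k:ℚ)), Finset.sum_div, Finset.mul_sum,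
      Finset.sum_mul, Finset.sum_mul]
  rw [Finset.sum_congr rfl step1]
  have step2 := tri (n+1) (fun k l =>
      (-1:ℚ)^k * ((k.choose l : ℚ) * ff (ρ + (n:ℚ) - 1) l * ff ((a:ℚ)+(k:ℚ)) (k-l) / (k.factorial : ℚ))
        * (((n+a).choose (k+a) : ℕ) : ℚ)
        * ((((k+m+a).factorial : ℕ) : ℚ) / ff (ρ + (((k+m+a):ℕ) : ℚ)) (k+m+a)))
  rw [step2]
  have step3 : ∀ l ∈ Finset.range (n+1),
      ∑ i ∈ Finset.range (n+1-l),
        (-1:ℚ)^(l+i) * (((l+i).choose l : ℚ) * ff (ρ + (n:ℚ) - 1) l * ff ((a:ℚ)+((l+i : ℕ):ℚ)) ((l+i)-l) / ((l+i).factorial : ℚ))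
          * (((n+a).choose ((l+i)+a) : ℕ) : ℚ)
          * (((((l+i)+m+a).factorial : ℕ) : ℚ) / ff (ρ + ((((l+i)+m+a):ℕ) : ℚ)) ((l+i)+m+a))
      = (ρ * ((n+a).factorial : ℚ) / ((n.factorial : ℚ) * ff (ρ + (n:ℚ) + (m:ℚ) + (a:ℚ)) (m+a+1)))
          * ((-1:ℚ)^l * (n.choose l : ℚ) * ∏ i ∈ Finset.range m, ((a:ℚ)+1 + (l:ℚ) + (i:ℚ))) := by
    intro l hl'
    have hl : l ≤ n := by have := Finset.mem_range.1 hl'; omega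
    rw [show n+1-l = (n-l)+1 from by omega]
    have inner : ∀ i ∈ Finset.range ((n-l)+1),
        (-1:ℚ)^(l+i) * (((l+i).choose l : ℚ) * ff (ρ + (n:ℚ) - 1) l * ff ((a:ℚ)+((l+i : ℕ):ℚ)) ((l+i)-l) / ((l+i).factorial : ℚ))
          * (((n+a).choose ((l+i)+a) : ℕ) : ℚ)
          * (((((l+i)+m+a).factorial : ℕ) : ℚ) / ff (ρ + ((((l+i)+m+a):ℕ) : ℚ)) ((l+i)+m+a))
        = ((-1:ℚ)^l * ff (ρ + (n:ℚ) - 1) l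
            * (((n+a).factorial : ℚ) / ((l.factorial : ℚ) * ((a+l).factorial : ℚ) * ((n-l).factorial : ℚ))))
          * ((-1:ℚ)^i * (((n-l).choose i : ℕ) : ℚ)
            * ((((m+a+l)+i).factorial : ℚ) / ff (ρ + ((((m+a+l)+i) : ℕ) : ℚ)) ((m+a+l)+i))) := by
      intro i hi'
      have hi : i ≤ n - l := by have := Finset.mem_range.1 hi'; omega
      rw [show (l+i)-l = i from by omega]
      rw [show (l+i)+m+a = (m+a+l)+i from by omega]
      rw [show (a:ℚ)+((l+i : ℕ):ℚ) = (a:ℚ)+(l:ℚ)+(i:ℚ) from by push_cast; ring]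
      rw [pow_add]
      have hdiv : ((l+i).choose l : ℚ) * ff ((a:ℚ)+(l:ℚ)+(i:ℚ)) i * ((n+a).choose ((l+i)+a) : ℚ) / ((l+i).factorial : ℚ)
          = ((n+a).factorial : ℚ) / ((l.factorial : ℚ) * ((a+l).factorial : ℚ) * ((n-l).factorial : ℚ)) * (((n-l).choose i : ℕ) : ℚ) := by
        have hc := coefId n a l i hl hi
        field_simp
        linear_combination hc
      linear_combination ((-1:ℚ)^l * (-1:ℚ)^i * ff (ρ + (n:ℚ) - 1) l
        * ((((m+a+l)+i).factorial : ℚ) / ff (ρ + ((((m+a+l)+i) : ℕ) : ℚ)) ((m+a+l)+i))) * hdiv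
    rw [Finset.sum_congr rfl inner, ← Finset.mul_sum, lemB ρ hρ (n-l) (m+a+l)]
    rw [show ρ + ((n-l : ℕ):ℚ) + ((m+a+l : ℕ):ℚ) = ρ + (n:ℚ) + (m:ℚ) + (a:ℚ) from by
      push_cast [Nat.cast_sub hl]; ring]
    rw [show (m+a+l)+1 = (m+a+1)+l from by omega, ff_add]
    rw [show ρ + (n:ℚ) + (m:ℚ) + (a:ℚ) - ((m+a+1 : ℕ):ℚ) = ρ + (n:ℚ) - 1 from by push_cast; ring]
    have hprod : (∏ i ∈ Finset.range m, ((a:ℚ)+1+(l:ℚ)+(i:ℚ)))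
        = ((m+a+l).factorial : ℚ) / ((a+l).factorial : ℚ) := by
      rw [eq_div_iff (by exact_mod_cast (a+l).factorial_ne_zero)]
      exact asc_prod a l m
    rw [Nat.cast_choose ℚ hl, hprod]
    have h1 := hffl l
    set f1 := ff (ρ + (n:ℚ) - 1) l with hf1
    set fX := ff (ρ + (n:ℚ) + (m:ℚ) + (a:ℚ)) (m+a+1) with hfX
    field_simp [h1, hffX]
  rw [Finset.sum_congr rfl step3, ← Finset.mul_sum, lemD m n ((a:ℚ)+1) hm, mul_zero]

/-- `L G Lᵀ` is diagonal; equivalently `∑_k L_{n,k} G_{k,m} = 0` for `m < n`. -/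
theorem catbert_LG_upper_triangular (p q : ℤ) (a : ℕ) (hp : 2 ≤ p) (hq : Int.gcd p q = 1)
    (hg : ∀ m : ℕ, gcat p q m ≠ 0) (n m : ℕ) (hm : m < n) :
    ∑ k ∈ Finset.range (n + 1), Lmat p q a n k * Gmat p q a k m = 0 := by
  have hpZ : (p:ℤ) ≠ 0 := by omega
  have hpQ : (p:ℚ) ≠ 0 := Int.cast_ne_zero.2 hpZ
  have hρ : ∀ z : ℤ, (q:ℚ)/(p:ℚ) + (z:ℤ) ≠ 0 := by
    intro z hz
    have hq' : (q:ℚ) = ((-z * p : ℤ) : ℚ) := by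
      push_cast
      field_simp at hz
      linarith
    have hqz : q = -z * p := by exact_mod_cast hq'
    have hdvd : p ∣ q := ⟨-z, by rw [hqz]; ring⟩
    have hgl := Int.gcd_eq_left (by omega) hdvd
    omega
  have hstep : ∀ k ∈ Finset.range (n+1), Lmat p q a n k * Gmat p q a k m
      = ((-1:ℚ)^n / (p:ℚ)^(2*(m+a)))
        * ((-1:ℚ)^k
          * (ff ((q:ℚ)/(p:ℚ) + (n:ℚ) - 1 + ((a:ℚ)+(k:ℚ))) k / (k.factorial : ℚ))
          * (((n+a).choose (k+a) : ℕ) : ℚ)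
          * ((((k+m+a).factorial : ℕ) : ℚ) / ff ((q:ℚ)/(p:ℚ) + (((k+m+a):ℕ) : ℚ)) (k+m+a))) := by
    intro k _
    simp only [Lmat, Gmat, gcat]
    rw [show (n:ℚ)+(a:ℚ) = ((n+a:ℕ):ℚ) from by push_cast; ring, gchoose_natCast]
    rw [gchoose_eq_ff, gchoose_eq_ff]
    rw [show (n:ℚ)+(k:ℚ)+(a:ℚ)+(q:ℚ)/(p:ℚ)-1 = (q:ℚ)/(p:ℚ) + (n:ℚ) - 1 + ((a:ℚ)+(k:ℚ)) from by ring]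
    rw [show ((k+m+a : ℕ):ℚ)+(q:ℚ)/(p:ℚ) = (q:ℚ)/(p:ℚ) + ((k+m+a : ℕ):ℚ) from by ring]
    rw [show 2*(k+m+a) = 2*k+2*(m+a) from by ring, pow_add, pow_add]
    have hffB : ff ((q:ℚ)/(p:ℚ) + ((k+m+a : ℕ):ℚ)) (k+m+a) ≠ 0 :=
      ff_rho_ne _ hρ _ _ ⟨((k+m+a : ℕ) : ℤ), by push_cast; ring⟩
    have hp2 : (p:ℚ)^(2*k) ≠ 0 := pow_ne_zero _ hpQ
    have hp3 : (p:ℚ)^(2*(m+a)) ≠ 0 := pow_ne_zero _ hpQ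
    have hkf : (k.factorial : ℚ) ≠ 0 := by exact_mod_cast k.factorial_ne_zero
    have hkmaf : ((k+m+a).factorial : ℚ) ≠ 0 := by exact_mod_cast (k+m+a).factorial_ne_zero
    set fA := ff ((q:ℚ)/(p:ℚ) + (n:ℚ) - 1 + ((a:ℚ)+(k:ℚ))) k with hfA
    set fB := ff ((q:ℚ)/(p:ℚ) + ((k+m+a : ℕ):ℚ)) (k+m+a) with hfB
    field_simp [hffB]
  rw [Finset.sum_congr rfl hstep, ← Finset.mul_sum,
    main_sum ((q:ℚ)/(p:ℚ)) hρ a m n hm, mul_zero]
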